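/- (Lemma 1, case (i)) Let k ∈ ℝ, x ∈ [0,1) and n ≥ 1. If x + r_n(x,k) ∈ [−1/3, 2/3), then w_n(x,k) = P(N_{n+x} ≤ n) + (x − 2/3 + k/(n+x))·P(N_{n+x} = n). -/

import Mathlib

open MeasureTheory ProbabilityTheory Filter Real Set
open scoped ENNReal NNReal

/-- Distribution of `Z_λ = N_λ + U`, `N_λ` Poisson(λ), `U` uniform on `(0,1)`, independent. -/
noncomputable def zMeasure (l : ℝ) : Measure ℝ :=
  Measure.map (fun p : ℝ × ℝ => p.1 + p.2)
    ((Measure.map (Nat.cast : ℕ → ℝ) (poissonMeasure l.toNNReal)).prod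
      (volume.restrict (Set.Ioo (0 : ℝ) 1)))

/-- The median of `Z_λ`: `inf {t : P(Z_λ ≤ t) ≥ 1/2}`. -/
noncomputable def medianZ (l : ℝ) : ℝ :=
  sInf {t : ℝ | (1 : ℝ≥0∞) / 2 ≤ zMeasure l (Set.Iic t)}

/-- The function `H` of the main theorem. -/
noncomputable def Hfun (x : ℝ) : ℝ :=
  if x ≤ 2 / 3 then x ^ 2 * (x - 1) / 3 + 4 / 135
  else x / 3 * (x ^ 2 - 4 * x + 5) - 86 / 135

/-- `w_n(x,k) = P(Z_{n+x} ≤ n + x + 1/3 + k/(n+x))`. -/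
noncomputable def w (n : ℕ) (x k : ℝ) : ℝ :=
  (zMeasure (n + x) (Set.Iic ((n : ℝ) + x + 1 / 3 + k / (n + x)))).toReal

/-- `r_n(x,k) = k/(n+x)`. -/
noncomputable def r (n : ℕ) (x k : ℝ) : ℝ := k / (n + x)

/-- `g_n(u) = e^{-u} u^n`. -/
noncomputable def g (n : ℕ) (u : ℝ) : ℝ := Real.exp (-u) * u ^ n

/-- `c_n(v,x) = ((n+v+x)/(n+1+x))^{n+1} e^{1-v}`. -/
noncomputable def c (n : ℕ) (v x : ℝ) : ℝ :=
  (((n : ℝ) + v + x) / ((n : ℝ) + 1 + x)) ^ (n + 1) * Real.exp (1 - v)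

/-- `Δ_n(x,k) = ((n+1)!/g_{n+1}(n+1+x)) (w_{n+1}(x,k) - w_n(x,k))`. -/
noncomputable def Δfun (n : ℕ) (x k : ℝ) : ℝ :=
  ((n + 1).factorial : ℝ) / g (n + 1) ((n : ℝ) + 1 + x) * (w (n + 1) x k - w n x k)

theorem lemma1_case_i (k x : ℝ) (hx : x ∈ Set.Ico (0 : ℝ) 1) (n : ℕ) (hn : 1 ≤ n)
    (h : x + r n x k ∈ Set.Ico (-(1 : ℝ) / 3) (2 / 3)) :
    w n x k
      = (poissonMeasure ((n : ℝ) + x).toNNReal (Set.Iic n)).toReal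
        + (x - 2 / 3 + k / (n + x))
          * (poissonMeasure ((n : ℝ) + x).toNNReal {n}).toReal := by
  obtain ⟨hx0, hx1⟩ := hx
  simp only [r, Set.mem_Ico] at h
  obtain ⟨h1, h2⟩ := h
  set S : Measure ℕ := poissonMeasure ((n : ℝ) + x).toNNReal with hS
  set c : ℝ := x + 1 / 3 + k / ((n : ℝ) + x) with hcdef
  have hc0 : 0 ≤ c := by rw [hcdef]; linarith
  have hc1 : c < 1 := by rw [hcdef]; linarith
  set t : ℝ := (n : ℝ) + x + 1 / 3 + k / ((n : ℝ) + x) with htdef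
  have ht : t = n + c := by rw [htdef, hcdef]; ring
  set ν : Measure ℝ := volume.restrict (Set.Ioo (0 : ℝ) 1) with hν
  -- the measurable function ℕ × ℝ → ℝ
  have hmble : Measurable (fun p : ℕ × ℝ => (p.1 : ℝ) + p.2) :=
    ((measurable_from_top).comp measurable_fst).add measurable_snd
  have hval : ∀ m : ℕ, ν (Set.Iic (t - m))
      = if m < n then 1 else if m = n then ENNReal.ofReal c else 0 := by
    intro m
    rw [hν, Measure.restrict_apply measurableSet_Iic]
    rcases lt_trichotomy m n with hm | hm | hm
    · have hmn : (m : ℝ) + 1 ≤ n := by exact_mod_cast hm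
      have : Set.Iic (t - m) ∩ Set.Ioo 0 1 = Set.Ioo 0 1 := by
        apply Set.inter_eq_self_of_subset_right
        intro b hb
        have : b < 1 := hb.2
        simp only [Set.mem_Iic]
        rw [ht]; linarith
      rw [this, Real.volume_Ioo, if_pos hm]; norm_num
    · subst hm
      have htn : t - m = c := by rw [ht]; ring
      have : Set.Iic (t - m) ∩ Set.Ioo 0 1 = Set.Ioc 0 c := by
        rw [htn]; ext b
        simp only [Set.mem_inter_iff, Set.mem_Iic, Set.mem_Ioo, Set.mem_Ioc]
        constructor
        · rintro ⟨h1, h2, h3⟩; exact ⟨h2, h1⟩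
        · rintro ⟨h1, h2⟩; exact ⟨h2, h1, lt_of_le_of_lt h2 hc1⟩
      rw [this, Real.volume_Ioc, if_neg (lt_irrefl m), if_pos rfl]; norm_num
    · have hmn : (n : ℝ) + 1 ≤ m := by exact_mod_cast hm
      have : Set.Iic (t - m) ∩ Set.Ioo 0 1 = ∅ := by
        ext b
        simp only [Set.mem_inter_iff, Set.mem_Iic, Set.mem_Ioo, Set.mem_empty_iff_false,
          iff_false, not_and]
        intro hb1 hb2
        rw [ht] at hb1; linarith
      rw [this, measure_empty, if_neg (by omega), if_neg (by omega)]
  have key : zMeasure ((n : ℝ) + x) (Set.Iic t)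
      = (∑ m ∈ Finset.range n, S {m}) + ENNReal.ofReal c * S {n} := by
    rw [zMeasure, ← hS]
    rw [show (Measure.map (Nat.cast : ℕ → ℝ) S).prod ν
        = Measure.map (Prod.map (Nat.cast : ℕ → ℝ) (id : ℝ → ℝ)) (S.prod ν) by
      rw [← Measure.map_prod_map S ν measurable_from_top measurable_id, Measure.map_id]]
    rw [Measure.map_map (by fun_prop) (Measurable.prodMap measurable_from_top measurable_id)]
    have hcomp : (fun p : ℝ × ℝ => p.1 + p.2) ∘ Prod.map (Nat.cast : ℕ → ℝ) (id : ℝ → ℝ)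
        = fun p : ℕ × ℝ => (p.1 : ℝ) + p.2 := rfl
    rw [hcomp, Measure.map_apply hmble measurableSet_Iic,
      Measure.prod_apply (hmble measurableSet_Iic)]
    have hpre : ∀ m : ℕ, (Prod.mk m ⁻¹' ((fun p : ℕ × ℝ => (p.1 : ℝ) + p.2) ⁻¹' Set.Iic t))
        = Set.Iic (t - m) := by
      intro m; ext b
      simp only [Set.mem_preimage, Set.mem_Iic]
      constructor <;> intro hb <;> linarith
    simp_rw [hpre, hval]
    rw [lintegral_countable' (μ := S)]
    rw [tsum_eq_sum (s := Finset.range (n + 1)) (by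
      intro m hm
      simp only [Finset.mem_range, not_lt] at hm
      rw [if_neg (by omega), if_neg (by omega), zero_mul])]
    rw [Finset.sum_range_succ, if_neg (lt_irrefl n), if_pos rfl]
    congr 1
    apply Finset.sum_congr rfl
    intro m hm
    simp only [Finset.mem_range] at hm
    rw [if_pos hm, one_mul]
  have hfin : ∀ s : Set ℕ, S s ≠ ⊤ := fun s => measure_ne_top S s
  have hIic : S (Set.Iic n) = ∑ m ∈ Finset.range (n + 1), S {m} := by
    have : (Set.Iic n : Set ℕ) = ⋃ m ∈ Finset.range (n + 1), {m} := by
      ext m; simp [Nat.lt_succ_iff]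
    rw [this, measure_biUnion_finset ?_ (fun m _ => measurableSet_singleton m)]
    intro i _ j _ hij
    simp [Set.disjoint_singleton, hij]
  have hw : w n x k = (∑ m ∈ Finset.range n, (S {m}).toReal) + c * (S {n}).toReal := by
    rw [w, show (n : ℝ) + x + 1 / 3 + k / ((n : ℝ) + x) = t from rfl, key,
      ENNReal.toReal_add (by exact (ENNReal.sum_lt_top.2 fun m _ => (hfin _).lt_top).ne)
        (ENNReal.mul_ne_top ENNReal.ofReal_ne_top (hfin _)),
      ENNReal.toReal_mul, ENNReal.toReal_ofReal hc0, ENNReal.toReal_sum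
        (fun m _ => hfin _)]
  rw [hw, hIic, ENNReal.toReal_sum (fun m _ => hfin _), Finset.sum_range_succ]
  rw [hcdef]
  ring
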